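/- Fix m ∈ ℕ and let ζ_n := (2(2m+3n)−1)!!/(6^{m+2n} (m+2n)!); ζ_n is the coefficient of ħⁿ in the m-th derivative with respect to the source j, evaluated at j = 0, of the partition function Z^{φ³}(ħ,j) of zero-dimensional φ³-theory with source, i.e. the generating sequence of the disconnected m-point functions of φ³-theory. Then ζ_n − (2^m/(2π)) · (3/2)^{n+m} · ( Γ(n+m) + (2/3)·(−5/24 + 3m/8 − m²/8)·Γ(n+m−1) ) = O( (3/2)ⁿ · Γ(n+m−2) ) as n → ∞. -/

import Mathlib

/-- `dfac m` is the odd double factorial `(2m-1)!! = (2m)!/(2^m m!)` as a real number. -/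
noncomputable def dfac (m : ℕ) : ℝ := ((2 * m).factorial : ℝ) / (2 ^ m * (m.factorial : ℝ))

/-- `ζ_n = (2(2m+3n)-1)!!/(6^{m+2n}(m+2n)!)`, the coefficient of `ħ^n` in the `m`-th
derivative at `j = 0` of the partition function of zero-dimensional φ³-theory with
source (the disconnected `m`-point functions). -/
noncomputable def zetaphi3 (m n : ℕ) : ℝ :=
  dfac (2 * m + 3 * n) / (6 ^ (m + 2 * n) * ((m + 2 * n).factorial : ℝ))

section Phi3Aux

open Real Filter Finset Stirling

noncomputable def rho (k : ℕ) : ℝ := Real.log (stirlingSeq k) - Real.log (Real.sqrt Real.pi)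

lemma diff_le (k : ℕ) :
    Real.log (stirlingSeq (k + 1)) - Real.log (stirlingSeq (k + 2)) ≤
      1 / (12 * ((k:ℝ) + 1)) - 1 / (12 * ((k:ℝ) + 2)) := by
  set t : ℝ := (1 / (2 * ((k:ℝ) + 1) + 1)) ^ 2 with ht
  have hk0 : (0:ℝ) ≤ (k:ℝ) := Nat.cast_nonneg k
  have ht0 : 0 ≤ t := sq_nonneg _
  have ht1 : t < 1 := by
    rw [ht, one_div, inv_pow]
    exact inv_lt_one_of_one_lt₀ (one_lt_pow₀ (by nlinarith) two_ne_zero)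
  have hgeo : HasSum (fun j : ℕ => 1 / 3 * t ^ (j + 1)) (1 / 3 * t * (1 - t)⁻¹) := by
    have h := (hasSum_geometric_of_lt_one ht0 ht1).mul_left (1 / 3 * t)
    have e : (fun j : ℕ => 1 / 3 * t ^ (j + 1)) = fun i => 1 / 3 * t * t ^ i := by
      funext j; rw [pow_succ']; ring
    rw [e]; exact h
  have hmain := log_stirlingSeq_diff_hasSum k
  have hle : Real.log (stirlingSeq (k + 1)) - Real.log (stirlingSeq (k + 2)) ≤
      1 / 3 * t * (1 - t)⁻¹ := by
    refine hasSum_le (fun j => ?_) hmain hgeo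
    have h1 : (1 : ℝ) / (2 * (↑(j + 1) : ℝ) + 1) ≤ 1 / 3 := by
      apply one_div_le_one_div_of_le (by norm_num)
      push_cast; linarith [Nat.cast_nonneg (α := ℝ) j]
    have h2 : ((1 / (2 * (↑(k + 1):ℝ) + 1)) ^ 2) ^ ((j + 1 : ℕ) : ℕ) = t ^ (j + 1) := by
      rw [ht]; norm_num
    rw [h2]
    exact mul_le_mul_of_nonneg_right h1 (by positivity)
  refine hle.trans_eq ?_
  have h2 : ((2 * ((k:ℝ) + 1) + 1) ^ 2 - 1) ≠ 0 := by nlinarith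
  have h3 : (2 * ((k:ℝ) + 1) + 1) ≠ 0 := by nlinarith
  have h4 : (1 - (1 / (2 * ((k:ℝ) + 1) + 1)) ^ 2) ≠ 0 := by
    rw [sub_ne_zero]
    intro h
    rw [div_pow, one_pow, eq_comm, div_eq_one_iff_eq (by positivity)] at h
    nlinarith
  rw [ht]
  field_simp
  ring

lemma diff_ge (k : ℕ) :
    1 / (12 * ((k:ℝ) + 1) + 1) - 1 / (12 * ((k:ℝ) + 2) + 1) ≤
      Real.log (stirlingSeq (k + 1)) - Real.log (stirlingSeq (k + 2)) := by
  have hk0 : (0:ℝ) ≤ (k:ℝ) := Nat.cast_nonneg k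
  have hmain := log_stirlingSeq_diff_hasSum k
  have hfirst : (1:ℝ) / (2 * ((0:ℕ) + 1 : ℕ) + 1) * ((1 / (2 * (↑(k + 1):ℝ) + 1)) ^ 2) ^ (((0:ℕ) + 1 : ℕ)) ≤
      Real.log (stirlingSeq (k + 1)) - Real.log (stirlingSeq (k + 2)) := by
    refine le_hasSum hmain 0 (fun j _ => by positivity)
  refine le_trans ?_ hfirst
  push_cast
  rw [pow_one, div_pow, one_pow]
  have e1 : (0:ℝ) < 12 * ((k:ℝ) + 1) + 1 := by nlinarith
  have e2 : (0:ℝ) < 12 * ((k:ℝ) + 2) + 1 := by nlinarith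
  have e3 : (0:ℝ) < (2 * ((k:ℝ) + 1) + 1) ^ 2 := by positivity
  rw [div_sub_div _ _ e1.ne' e2.ne', div_mul_div_comm, div_le_div_iff₀ (by positivity) (by positivity)]
  nlinarith

lemma tendsto_log_stirling : Tendsto (fun k : ℕ => Real.log (stirlingSeq (k + 1)))
    atTop (nhds (Real.log (Real.sqrt Real.pi))) := by
  have h := Stirling.tendsto_stirlingSeq_sqrt_pi
  have h2 : Tendsto (fun k : ℕ => stirlingSeq (k + 1)) atTop (nhds (Real.sqrt Real.pi)) :=
    h.comp (tendsto_add_atTop_nat 1)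
  exact ((Real.continuousAt_log (by positivity)).tendsto).comp h2

lemma tendsto_aux (a : ℝ) :
    Tendsto (fun k : ℕ => 1 / (12 * ((k:ℝ) + 1) + a)) atTop (nhds 0) := by
  simp only [one_div]
  apply Filter.Tendsto.inv_tendsto_atTop
  apply tendsto_atTop_add_const_right
  apply Tendsto.const_mul_atTop (by norm_num : (0:ℝ) < 12)
  exact tendsto_atTop_add_const_right _ _ tendsto_natCast_atTop_atTop

lemma rho_le (k : ℕ) : rho (k + 1) ≤ 1 / (12 * ((k:ℝ) + 1)) := by
  have hmono : Monotone (fun k : ℕ => Real.log (stirlingSeq (k + 1)) - 1 / (12 * ((k:ℝ) + 1))) := by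
    apply monotone_nat_of_le_succ
    intro j
    have := diff_le j
    have e : j + 1 + 1 = j + 2 := rfl
    rw [e]
    push_cast
    ring_nf
    ring_nf at this
    linarith
  have htend : Tendsto (fun k : ℕ => Real.log (stirlingSeq (k + 1)) - 1 / (12 * ((k:ℝ) + 1)))
      atTop (nhds (Real.log (Real.sqrt Real.pi))) := by
    have := (tendsto_log_stirling).sub (tendsto_aux 0)
    simpa using this
  have := hmono.ge_of_tendsto htend k
  unfold rho
  linarith

lemma rho_ge (k : ℕ) : 1 / (12 * ((k:ℝ) + 1) + 1) ≤ rho (k + 1) := by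
  have hanti : Antitone (fun k : ℕ => Real.log (stirlingSeq (k + 1)) - 1 / (12 * ((k:ℝ) + 1) + 1)) := by
    apply antitone_nat_of_succ_le
    intro j
    have := diff_ge j
    have e : j + 1 + 1 = j + 2 := rfl
    rw [e]
    push_cast
    ring_nf
    ring_nf at this
    linarith
  have htend : Tendsto (fun k : ℕ => Real.log (stirlingSeq (k + 1)) - 1 / (12 * ((k:ℝ) + 1) + 1))
      atTop (nhds (Real.log (Real.sqrt Real.pi))) := by
    have := (tendsto_log_stirling).sub (tendsto_aux 1)
    simpa using this
  have := hanti.le_of_tendsto htend k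
  unfold rho
  linarith

lemma robbins {k : ℕ} (hk : 1 ≤ k) :
    1 / (12 * (k:ℝ) + 1) ≤ rho k ∧ rho k ≤ 1 / (12 * (k:ℝ)) := by
  obtain ⟨j, rfl⟩ := Nat.exists_eq_add_of_le hk
  have h1 := rho_ge j
  have h2 := rho_le j
  have e : 1 + j = j + 1 := by ring
  rw [e]
  push_cast
  constructor
  · refine le_trans (le_of_eq ?_) h1; ring_nf
  · refine le_trans h2 (le_of_eq ?_); ring_nf

lemma rho_close {k : ℕ} (hk : 1 ≤ k) :
    |rho k - 1 / (12 * (k:ℝ))| ≤ 1 / (144 * (k:ℝ) ^ 2) := by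
  obtain ⟨h1, h2⟩ := robbins hk
  have hk' : (1:ℝ) ≤ (k:ℝ) := by exact_mod_cast hk
  rw [abs_le]
  constructor
  · have : 1 / (12 * (k:ℝ)) - 1 / (12 * (k:ℝ) + 1) ≤ 1 / (144 * (k:ℝ) ^ 2) := by
      rw [div_sub_div _ _ (by nlinarith) (by nlinarith), div_le_div_iff₀ (by nlinarith) (by nlinarith)]
      nlinarith
    linarith
  · have : (0:ℝ) < 1 / (144 * (k:ℝ) ^ 2) := by positivity
    linarith

lemma log_factorial {k : ℕ} (hk : 1 ≤ k) :
    Real.log (k.factorial) = rho k + ((k:ℝ) + 1 / 2) * Real.log k - k + Real.log (2 * Real.pi) / 2 := by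
  have hk0 : (0:ℝ) < (k:ℝ) := by exact_mod_cast hk
  have h := Stirling.log_stirlingSeq_formula k
  have hlog2k : Real.log (2 * (k:ℝ)) = Real.log 2 + Real.log k := Real.log_mul (by norm_num) hk0.ne'
  have hlogke : Real.log ((k:ℝ) / Real.exp 1) = Real.log k - 1 := by
    rw [Real.log_div hk0.ne' (Real.exp_ne_zero 1), Real.log_exp]
  have hsqrtpi : Real.log (Real.sqrt Real.pi) = Real.log Real.pi / 2 := Real.log_sqrt Real.pi_pos.le
  have hlog2pi : Real.log (2 * Real.pi) = Real.log 2 + Real.log Real.pi :=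
    Real.log_mul (by norm_num) Real.pi_pos.ne'
  unfold rho
  rw [hsqrtpi, hlog2pi] at *
  rw [hlog2k, hlogke] at h
  linarith [h]

lemma taylor2 {t : ℝ} (h0 : 0 ≤ t) (h : t ≤ 1/2) :
    |Real.log (1 - t) + (t + t^2/2)| ≤ 2*t^3 := by
  have h1 : |t| < 1 := by rw [abs_of_nonneg h0]; linarith
  have := abs_log_sub_add_sum_range_le h1 2
  rw [Finset.sum_range_succ, Finset.sum_range_one] at this
  norm_num at this
  rw [abs_of_nonneg h0] at this
  calc |Real.log (1-t) + (t + t^2/2)| = |(t + t^2/2) + Real.log (1-t)| := by ring_nf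
    _ ≤ t^3 / (1-t) := this
    _ ≤ 2*t^3 := by
      rw [div_le_iff₀ (by linarith)]
      nlinarith [mul_nonneg (pow_nonneg h0 3) (show (0:ℝ) ≤ 1-2*t by linarith)]

noncomputable def Lf (m n : ℕ) : ℝ :=
  rho (4*m+6*n) - rho (2*m+3*n) - rho (m+2*n) - rho (n+m)
  + (2*(m:ℝ)+3*(n:ℝ)) * Real.log (1 - (m:ℝ)/(3*((n:ℝ)+(m:ℝ))))
  - ((m:ℝ)+2*(n:ℝ)+1/2) * Real.log (1 - (m:ℝ)/(2*((n:ℝ)+(m:ℝ))))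

lemma zeta_pos (m n : ℕ) : 0 < zetaphi3 m n := by
  unfold zetaphi3 dfac
  positivity

lemma log_zeta (m n : ℕ) (hn : 1 ≤ n) :
    Real.log (zetaphi3 m n) =
      ((m:ℝ) * Real.log 2 - Real.log (2*Real.pi)) + ((n:ℝ)+(m:ℝ)) * (Real.log 3 - Real.log 2)
      + Real.log (((n+m-1).factorial : ℝ)) + Lf m n := by
  have hn1 : (1:ℝ) ≤ (n:ℝ) := by exact_mod_cast hn
  have hm0 : (0:ℝ) ≤ (m:ℝ) := Nat.cast_nonneg m
  set X : ℝ := (n:ℝ)+(m:ℝ) with hXdef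
  have hX : 0 < X := by linarith
  have hs : (0:ℝ) < 1 - (m:ℝ)/(3*X) := by
    rw [sub_pos, div_lt_one (by positivity)]; linarith
  have ht : (0:ℝ) < 1 - (m:ℝ)/(2*X) := by
    rw [sub_pos, div_lt_one (by positivity)]; linarith
  -- log of casts of the three relevant numbers
  have cA : ((2*(2*m+3*n) : ℕ) : ℝ) = 2*3*X * (1 - (m:ℝ)/(3*X)) := by
    push_cast; field_simp; ring
  have cB : ((2*m+3*n : ℕ) : ℝ) = 3*X * (1 - (m:ℝ)/(3*X)) := by
    push_cast; field_simp; ring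
  have cC : ((m+2*n : ℕ) : ℝ) = 2*X * (1 - (m:ℝ)/(2*X)) := by
    push_cast; field_simp; ring
  have cX : ((n+m : ℕ) : ℝ) = X := by push_cast; ring
  have lA : Real.log ((2*(2*m+3*n) : ℕ) : ℝ) =
      Real.log 2 + Real.log 3 + Real.log X + Real.log (1 - (m:ℝ)/(3*X)) := by
    rw [cA, Real.log_mul (by positivity) hs.ne', Real.log_mul (by positivity) hX.ne',
      Real.log_mul (by norm_num) (by norm_num)]
  have lB : Real.log ((2*m+3*n : ℕ) : ℝ) =
      Real.log 3 + Real.log X + Real.log (1 - (m:ℝ)/(3*X)) := by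
    rw [cB, Real.log_mul (by positivity) hs.ne', Real.log_mul (by norm_num) hX.ne']
  have lC : Real.log ((m+2*n : ℕ) : ℝ) =
      Real.log 2 + Real.log X + Real.log (1 - (m:ℝ)/(2*X)) := by
    rw [cC, Real.log_mul (by positivity) ht.ne', Real.log_mul (by norm_num) hX.ne']
  have lX : Real.log ((n+m : ℕ) : ℝ) = Real.log X := by rw [cX]
  -- factorial relation : (n+m)! = (n+m) * (n+m-1)!
  have hfacrel : ((n+m).factorial : ℝ) = ((n+m : ℕ) : ℝ) * ((n+m-1).factorial : ℝ) := by
    have h := Nat.mul_factorial_pred (show n + m ≠ 0 by omega)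
    exact_mod_cast (congrArg (fun z : ℕ => (z : ℝ)) h).symm
  have hlognm1 : Real.log (((n+m-1).factorial : ℝ)) =
      Real.log (((n+m).factorial : ℝ)) - Real.log X := by
    rw [hfacrel, Real.log_mul (by positivity) (by positivity), lX]
    ring
  -- expand log zeta
  have hz : Real.log (zetaphi3 m n) =
      Real.log (((2*(2*m+3*n)).factorial : ℝ)) - ((2*m+3*n : ℕ):ℝ) * Real.log 2
      - Real.log (((2*m+3*n).factorial : ℝ)) - ((m+2*n : ℕ):ℝ) * Real.log 6
      - Real.log (((m+2*n).factorial : ℝ)) := by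
    unfold zetaphi3 dfac
    rw [Real.log_div (by positivity) (by positivity), Real.log_div (by positivity) (by positivity),
      Real.log_mul (by positivity) (by positivity), Real.log_mul (by positivity) (by positivity),
      Real.log_pow, Real.log_pow]
    push_cast
    ring
  rw [hz, hlognm1]
  rw [log_factorial (show 1 ≤ 2*(2*m+3*n) by omega),
      log_factorial (show 1 ≤ 2*m+3*n by omega),
      log_factorial (show 1 ≤ m+2*n by omega),
      log_factorial (show 1 ≤ n+m by omega)]
  rw [lA, lB, lC, lX]
  have l6 : Real.log 6 = Real.log 2 + Real.log 3 := by
    rw [show (6:ℝ) = 2*3 by norm_num, Real.log_mul (by norm_num) (by norm_num)]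
  have l2pi : Real.log (2*Real.pi) = Real.log 2 + Real.log Real.pi :=
    Real.log_mul (by norm_num) Real.pi_pos.ne'
  have e1 : 2*(2*m+3*n) = 4*m+6*n := by ring
  rw [e1, l6, l2pi]
  unfold Lf
  push_cast
  ring

set_option maxHeartbeats 2000000 in
lemma L_close_real (M X rA rB rC rX : ℝ) (hm0 : 0 ≤ M) (hX1 : 1 ≤ X) (hMX : M ≤ X)
    (hrA : |rA - 1/(12*(6*X-2*M))| ≤ 1/(144*X^2))
    (hrB : |rB - 1/(12*(3*X-M))| ≤ 1/(144*X^2))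
    (hrC : |rC - 1/(12*(2*X-M))| ≤ 1/(144*X^2))
    (hrX : |rX - 1/(12*X)| ≤ 1/(144*X^2)) :
    |rA - rB - rC - rX + (3*X-M) * Real.log (1 - M/(3*X))
      - (2*X-M+1/2) * Real.log (1 - M/(2*X))
      - ((-5)/36 + M/4 - M^2/12)/X| ≤ (1 + M + M^2 + 2*M^3)/X^2 := by
  have hX : 0 < X := by linarith
  have hA : 0 < 6*X - 2*M := by linarith
  have hB : 0 < 3*X - M := by linarith
  have hC : 0 < 2*X - M := by linarith
  have h5 : |1/(12*(6*X-2*M)) - 1/(72*X)| ≤ M/(36*X^2) := by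
    have e : 1/(12*(6*X-2*M)) - 1/(72*X) = M/(36*(6*X-2*M)*X) := by
      field_simp; ring
    rw [e, abs_of_nonneg (by positivity), div_le_div_iff₀ (by positivity) (by positivity)]
    nlinarith [mul_le_mul_of_nonneg_left hMX (by positivity : (0:ℝ) ≤ 36*M*X)]
  have h6 : |1/(12*(3*X-M)) - 1/(36*X)| ≤ M/(36*X^2) := by
    have e : 1/(12*(3*X-M)) - 1/(36*X) = M/(36*(3*X-M)*X) := by
      field_simp; ring
    rw [e, abs_of_nonneg (by positivity), div_le_div_iff₀ (by positivity) (by positivity)]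
    nlinarith [mul_le_mul_of_nonneg_left hMX (by positivity : (0:ℝ) ≤ 36*M*X)]
  have h7 : |1/(12*(2*X-M)) - 1/(24*X)| ≤ M/(24*X^2) := by
    have e : 1/(12*(2*X-M)) - 1/(24*X) = M/(24*(2*X-M)*X) := by
      field_simp; ring
    rw [e, abs_of_nonneg (by positivity), div_le_div_iff₀ (by positivity) (by positivity)]
    nlinarith [mul_le_mul_of_nonneg_left hMX (by positivity : (0:ℝ) ≤ 24*M*X)]
  have hs0 : (0:ℝ) ≤ M/(3*X) := by positivity
  have hs2 : M/(3*X) ≤ 1/2 := by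
    rw [div_le_div_iff₀ (by positivity) (by norm_num)]; linarith
  have herr2 := taylor2 hs0 hs2
  have h8 : |(3*X - M) * Real.log (1 - M/(3*X)) - (-M + M^2/(6*X))| ≤ (5/18)*M^3/X^2 := by
    have e : (3*X - M) * Real.log (1 - M/(3*X)) - (-M + M^2/(6*X)) =
        (3*X - M) * (Real.log (1 - M/(3*X)) + (M/(3*X) + (M/(3*X))^2/2)) + M^3/(18*X^2) := by
      field_simp; ring
    rw [e]
    have hb : |(3*X - M) * (Real.log (1 - M/(3*X)) + (M/(3*X) + (M/(3*X))^2/2))| ≤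
        (3*X) * (2*(M/(3*X))^3) := by
      rw [abs_mul, abs_of_nonneg hB.le]
      exact mul_le_mul (by linarith) herr2 (abs_nonneg _) (by positivity)
    have hb2 : (3*X) * (2*(M/(3*X))^3) = (2/9)*M^3/X^2 := by
      field_simp; ring
    calc |(3*X - M) * (Real.log (1 - M/(3*X)) + (M/(3*X) + (M/(3*X))^2/2)) + M^3/(18*X^2)|
        ≤ (3*X) * (2*(M/(3*X))^3) + M^3/(18*X^2) := by
          refine (abs_add_le _ _).trans ?_
          rw [abs_of_nonneg (by positivity : (0:ℝ) ≤ M^3/(18*X^2))]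
          linarith
      _ = (5/18)*M^3/X^2 := by rw [hb2]; field_simp; ring
  have ht0 : (0:ℝ) ≤ M/(2*X) := by positivity
  have ht2 : M/(2*X) ≤ 1/2 := by
    rw [div_le_div_iff₀ (by positivity) (by norm_num)]; linarith
  have herr3 := taylor2 ht0 ht2
  have h9 : |(-(2*X - M + 1/2)) * Real.log (1 - M/(2*X)) - (M + (M/4 - M^2/4)/X)| ≤
      (M^2/16 + (7/8)*M^3)/X^2 := by
    have e : (-(2*X - M + 1/2)) * Real.log (1 - M/(2*X)) - (M + (M/4 - M^2/4)/X) =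
        (-(2*X - M + 1/2)) * (Real.log (1 - M/(2*X)) + (M/(2*X) + (M/(2*X))^2/2))
        + (M^2*(1/2 - M)/8)/X^2 := by
      field_simp; ring
    rw [e]
    have hb : |(-(2*X - M + 1/2)) * (Real.log (1 - M/(2*X)) + (M/(2*X) + (M/(2*X))^2/2))| ≤
        (3*X) * (2*(M/(2*X))^3) := by
      rw [abs_mul, abs_neg, abs_of_nonneg (by linarith : (0:ℝ) ≤ 2*X - M + 1/2)]
      exact mul_le_mul (by linarith) herr3 (abs_nonneg _) (by positivity)
    have hb2 : (3*X) * (2*(M/(2*X))^3) = (3/4)*M^3/X^2 := by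
      field_simp; ring
    have hb3 : |(M^2*(1/2 - M)/8)/X^2| ≤ (M^2/16 + M^3/8)/X^2 := by
      rw [abs_div, abs_of_nonneg (by positivity : (0:ℝ) ≤ X^2)]
      gcongr
      rw [abs_le]
      constructor <;> nlinarith [sq_nonneg M, pow_nonneg hm0 3]
    calc |(-(2*X - M + 1/2)) * (Real.log (1 - M/(2*X)) + (M/(2*X) + (M/(2*X))^2/2))
          + (M^2*(1/2 - M)/8)/X^2|
        ≤ (3*X) * (2*(M/(2*X))^3) + |(M^2*(1/2 - M)/8)/X^2| := by
          refine (abs_add_le _ _).trans ?_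
          linarith
      _ ≤ (3/4)*M^3/X^2 + (M^2/16 + M^3/8)/X^2 := by rw [hb2]; linarith
      _ = (M^2/16 + (7/8)*M^3)/X^2 := by field_simp; ring
  -- decomposition
  have decomp : rA - rB - rC - rX + (3*X-M) * Real.log (1 - M/(3*X))
      - (2*X-M+1/2) * Real.log (1 - M/(2*X)) - ((-5)/36 + M/4 - M^2/12)/X =
      (rA - 1/(12*(6*X-2*M))) - (rB - 1/(12*(3*X-M))) - (rC - 1/(12*(2*X-M)))
      - (rX - 1/(12*X))
      + (1/(12*(6*X-2*M)) - 1/(72*X)) - (1/(12*(3*X-M)) - 1/(36*X))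
      - (1/(12*(2*X-M)) - 1/(24*X))
      + ((3*X - M) * Real.log (1 - M/(3*X)) - (-M + M^2/(6*X)))
      + ((-(2*X - M + 1/2)) * Real.log (1 - M/(2*X)) - (M + (M/4 - M^2/4)/X)) := by
    field_simp
    ring
  rw [decomp]
  have T : ∀ a b : ℝ, |a - b| ≤ |a| + |b| := fun a b => abs_sub a b
  calc |(rA - 1/(12*(6*X-2*M))) - (rB - 1/(12*(3*X-M))) - (rC - 1/(12*(2*X-M)))
      - (rX - 1/(12*X))
      + (1/(12*(6*X-2*M)) - 1/(72*X)) - (1/(12*(3*X-M)) - 1/(36*X))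
      - (1/(12*(2*X-M)) - 1/(24*X))
      + ((3*X - M) * Real.log (1 - M/(3*X)) - (-M + M^2/(6*X)))
      + ((-(2*X - M + 1/2)) * Real.log (1 - M/(2*X)) - (M + (M/4 - M^2/4)/X))|
      ≤ 1/(144*X^2) + 1/(144*X^2) + 1/(144*X^2) + 1/(144*X^2)
        + M/(36*X^2) + M/(36*X^2) + M/(24*X^2)
        + (5/18)*M^3/X^2 + (M^2/16 + (7/8)*M^3)/X^2 := by
          rw [abs_le]
          obtain ⟨a1,b1⟩ := abs_le.mp hrA
          obtain ⟨a2,b2⟩ := abs_le.mp hrB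
          obtain ⟨a3,b3⟩ := abs_le.mp hrC
          obtain ⟨a4,b4⟩ := abs_le.mp hrX
          obtain ⟨a5,b5⟩ := abs_le.mp h5
          obtain ⟨a6,b6⟩ := abs_le.mp h6
          obtain ⟨a7,b7⟩ := abs_le.mp h7
          obtain ⟨a8,b8⟩ := abs_le.mp h8
          obtain ⟨a9,b9⟩ := abs_le.mp h9
          constructor <;> linarith
    _ ≤ (1 + M + M^2 + 2*M^3)/X^2 := by
          rw [← sub_nonneg]
          have e : (1 + M + M^2 + 2*M^3)/X^2 - (1/(144*X^2) + 1/(144*X^2) + 1/(144*X^2)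
              + 1/(144*X^2) + M/(36*X^2) + M/(36*X^2) + M/(24*X^2)
              + (5/18)*M^3/X^2 + (M^2/16 + (7/8)*M^3)/X^2)
              = (35/36 + (65/72)*M + (15/16)*M^2 + (61/72)*M^3)/X^2 := by
            field_simp
            ring
          rw [e]
          have hnum : (0:ℝ) ≤ 35/36 + (65/72)*M + (15/16)*M^2 + (61/72)*M^3 := by
            nlinarith [sq_nonneg M, pow_nonneg hm0 3]
          exact div_nonneg hnum (by positivity)

lemma zeta_eq (m n : ℕ) (hn : 1 ≤ n) :
    zetaphi3 m n = 2^m/(2*Real.pi) * (3/2)^(n+m) * ((n+m-1).factorial : ℝ) * Real.exp (Lf m n) := by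
  have hz := zeta_pos m n
  have hR : (0:ℝ) < 2^m/(2*Real.pi) * (3/2)^(n+m) * ((n+m-1).factorial : ℝ) * Real.exp (Lf m n) := by
    positivity
  rw [← Real.exp_log hz, ← Real.exp_log hR]
  congr 1
  rw [log_zeta m n hn]
  rw [Real.log_mul (by positivity) (Real.exp_ne_zero _),
    Real.log_mul (by positivity) (by positivity),
    Real.log_exp,
    Real.log_mul (by positivity) (by positivity),
    Real.log_mul (by positivity) (by positivity),
    Real.log_div (by positivity) (by positivity),
    Real.log_pow, Real.log_pow,
    Real.log_div (by norm_num) (by norm_num),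
    Real.log_mul (by norm_num) (Real.pi_ne_zero)]
  push_cast
  ring

lemma L_close (m : ℕ) {n : ℕ} (hn : 1 ≤ n) :
    |Lf m n - ((-5)/36 + (m:ℝ)/4 - (m:ℝ)^2/12)/((n:ℝ)+(m:ℝ))| ≤
      (1 + (m:ℝ) + (m:ℝ)^2 + 2*(m:ℝ)^3)/((n:ℝ)+(m:ℝ))^2 := by
  have hn1 : (1:ℝ) ≤ (n:ℝ) := by exact_mod_cast hn
  have hm0 : (0:ℝ) ≤ (m:ℝ) := Nat.cast_nonneg m
  have hX1 : 1 ≤ (n:ℝ)+(m:ℝ) := by linarith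
  have hX0 : 0 < (n:ℝ)+(m:ℝ) := by linarith
  have hMX : (m:ℝ) ≤ (n:ℝ)+(m:ℝ) := by linarith
  have cA : ((4*m+6*n : ℕ) : ℝ) = 6*((n:ℝ)+(m:ℝ)) - 2*(m:ℝ) := by push_cast; ring
  have cB : ((2*m+3*n : ℕ) : ℝ) = 3*((n:ℝ)+(m:ℝ)) - (m:ℝ) := by push_cast; ring
  have cC : ((m+2*n : ℕ) : ℝ) = 2*((n:ℝ)+(m:ℝ)) - (m:ℝ) := by push_cast; ring
  have cX : ((n+m : ℕ) : ℝ) = ((n:ℝ)+(m:ℝ)) := by push_cast; ring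
  have hrA : |rho (4*m+6*n) - 1/(12*(6*((n:ℝ)+(m:ℝ))-2*(m:ℝ)))| ≤ 1/(144*((n:ℝ)+(m:ℝ))^2) := by
    have h := rho_close (show 1 ≤ 4*m+6*n by omega)
    rw [cA] at h
    refine h.trans ?_
    gcongr
    linarith
  have hrB : |rho (2*m+3*n) - 1/(12*(3*((n:ℝ)+(m:ℝ))-(m:ℝ)))| ≤ 1/(144*((n:ℝ)+(m:ℝ))^2) := by
    have h := rho_close (show 1 ≤ 2*m+3*n by omega)
    rw [cB] at h
    refine h.trans ?_
    gcongr
    linarith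
  have hrC : |rho (m+2*n) - 1/(12*(2*((n:ℝ)+(m:ℝ))-(m:ℝ)))| ≤ 1/(144*((n:ℝ)+(m:ℝ))^2) := by
    have h := rho_close (show 1 ≤ m+2*n by omega)
    rw [cC] at h
    refine h.trans ?_
    gcongr
    linarith
  have hrX : |rho (n+m) - 1/(12*((n:ℝ)+(m:ℝ)))| ≤ 1/(144*((n:ℝ)+(m:ℝ))^2) := by
    have h := rho_close (show 1 ≤ n+m by omega)
    rw [cX] at h
    exact h
  have main := L_close_real (m:ℝ) ((n:ℝ)+(m:ℝ)) (rho (4*m+6*n)) (rho (2*m+3*n)) (rho (m+2*n))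
    (rho (n+m)) hm0 hX1 hMX hrA hrB hrC hrX
  have e : Lf m n = rho (4*m+6*n) - rho (2*m+3*n) - rho (m+2*n) - rho (n+m)
      + (3*((n:ℝ)+(m:ℝ))-(m:ℝ)) * Real.log (1 - (m:ℝ)/(3*((n:ℝ)+(m:ℝ))))
      - (2*((n:ℝ)+(m:ℝ))-(m:ℝ)+1/2) * Real.log (1 - (m:ℝ)/(2*((n:ℝ)+(m:ℝ)))) := by
    unfold Lf
    ring
  rw [e]
  exact main


set_option maxHeartbeats 1000000 in
/-- For fixed `m`,
`ζ_n - (2^m/(2π))(3/2)^{n+m}(Γ(n+m) + (2/3)(-5/24 + 3m/8 - m²/8)Γ(n+m-1))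
  = O((3/2)^n Γ(n+m-2))` as `n → ∞`. -/
theorem stmt13 (m : ℕ) :
    (fun n : ℕ => zetaphi3 m n -
        (2 : ℝ) ^ m / (2 * Real.pi) * (3 / 2 : ℝ) ^ (n + m) *
          (Real.Gamma ((n : ℝ) + (m : ℝ)) +
            2 / 3 * (-5 / 24 + 3 * (m : ℝ) / 8 - (m : ℝ) ^ 2 / 8) *
              Real.Gamma ((n : ℝ) + (m : ℝ) - 1)))
      =O[Filter.atTop] fun n : ℕ =>
        (3 / 2 : ℝ) ^ n * Real.Gamma ((n : ℝ) + (m : ℝ) - 2) := by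
  set M : ℝ := (m:ℝ) with hM
  have hm0 : 0 ≤ M := Nat.cast_nonneg m
  set c : ℝ := 2/3 * (-5/24 + 3*M/8 - M^2/8) with hc
  set C₀ : ℝ := 1 + M + M^2 + 2*M^3 with hC₀
  have hC₀0 : 0 < C₀ := by rw [hC₀]; nlinarith [sq_nonneg M, pow_nonneg hm0 3]
  set C₁ : ℝ := (|c| + C₀)^2 + C₀ + 2*|c| with hC₁
  set K : ℝ := 2^m/(2*Real.pi) with hK
  have hKpos : 0 < K := by rw [hK]; positivity
  rw [Asymptotics.isBigO_iff]
  refine ⟨K * (3/2)^m * C₁, ?_⟩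
  obtain ⟨N2, hN2⟩ := exists_nat_ge (|c| + C₀ + 2)
  filter_upwards [eventually_ge_atTop (N2 + 3)] with n hn
  have hn3 : 3 ≤ n := by omega
  have hn1 : 1 ≤ n := by omega
  set X : ℝ := (n:ℝ) + M with hX
  have hnN2 : (N2:ℝ) ≤ (n:ℝ) := by exact_mod_cast le_trans (by omega) hn
  have hXbig : |c| + C₀ + 2 ≤ X := by
    rw [hX]; have := hN2.trans hnN2; linarith
  have hX3 : (3:ℝ) ≤ X := by
    rw [hX]; have : (3:ℝ) ≤ (n:ℝ) := by exact_mod_cast hn3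
    linarith
  have hX0 : 0 < X := by linarith
  have hX1 : 0 < X - 1 := by linarith
  have hX2 : 0 < X - 2 := by linarith
  -- Gamma facts
  have hGamma : Real.Gamma X = ((n+m-1).factorial : ℝ) := by
    rw [show X = ((n+m-1:ℕ):ℝ) + 1 by
      rw [hX, hM, Nat.cast_sub (by omega : 1 ≤ n+m)]
      push_cast
      ring]
    exact Real.Gamma_nat_eq_factorial _
  have hG1 : Real.Gamma X = (X-1) * Real.Gamma (X-1) := by
    rw [show X = (X-1)+1 by ring, Real.Gamma_add_one hX1.ne']
    ring_nf
  have hG2 : Real.Gamma (X-1) = (X-2) * Real.Gamma (X-2) := by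
    rw [show X-1 = (X-2)+1 by ring, Real.Gamma_add_one hX2.ne']
  have hG2pos : 0 < Real.Gamma (X-2) := Real.Gamma_pos_of_pos hX2
  -- the L bounds
  have hL := L_close m hn1
  have hcc : ((-5)/36 + (m:ℝ)/4 - (m:ℝ)^2/12) = c := by rw [hc, hM]; ring
  rw [hcc] at hL
  have hLc : |Lf m n - c/X| ≤ C₀/X^2 := hL
  clear_value M X c C₀ C₁ K
  have habs_cX : |c/X| ≤ |c|/X := by rw [abs_div, abs_of_pos hX0]
  have hLfsmall : |Lf m n| ≤ (|c| + C₀)/X := by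
    have h1 : |Lf m n| ≤ |Lf m n - c/X| + |c/X| := by
      calc |Lf m n| = |(Lf m n - c/X) + c/X| := by ring_nf
        _ ≤ |Lf m n - c/X| + |c/X| := abs_add_le _ _
    have h2 : C₀/X^2 ≤ C₀/X := by
      apply div_le_div_of_nonneg_left hC₀0.le hX0
      nlinarith
    calc |Lf m n| ≤ C₀/X^2 + |c|/X := by linarith
      _ ≤ C₀/X + |c|/X := by linarith
      _ = (|c| + C₀)/X := by ring
  have hLf1 : |Lf m n| ≤ 1 := by
    refine hLfsmall.trans ?_
    rw [div_le_one hX0]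
    linarith [abs_nonneg c]
  have hexp : |Real.exp (Lf m n) - 1 - Lf m n| ≤ (Lf m n)^2 :=
    Real.abs_exp_sub_one_sub_id_le hLf1
  have hLfsq : (Lf m n)^2 ≤ (|c| + C₀)^2/X^2 := by
    have h1 : (Lf m n)^2 = |Lf m n|^2 := (sq_abs _).symm
    have h2 : |Lf m n|^2 ≤ ((|c| + C₀)/X)^2 :=
      pow_le_pow_left₀ (abs_nonneg _) hLfsmall 2
    rw [h1, div_pow] at *
    linarith
  have hshift : |c/X - c/(X-1)| ≤ 2*|c|/X^2 := by
    have e : c/X - c/(X-1) = -c/(X*(X-1)) := by field_simp; ring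
    rw [e, abs_div, abs_neg, abs_of_pos (mul_pos hX0 hX1)]
    rw [div_le_div_iff₀ (by positivity) (by positivity)]
    have hh := mul_le_mul_of_nonneg_left (show X ≤ 2*(X-1) by linarith)
      (mul_nonneg (abs_nonneg c) hX0.le)
    nlinarith [hh]
  have hkey : |Real.exp (Lf m n) - 1 - c/(X-1)| ≤ C₁/X^2 := by
    have e : Real.exp (Lf m n) - 1 - c/(X-1) =
        (Real.exp (Lf m n) - 1 - Lf m n) + (Lf m n - c/X) + (c/X - c/(X-1)) := by ring
    rw [e]
    calc |(Real.exp (Lf m n) - 1 - Lf m n) + (Lf m n - c/X) + (c/X - c/(X-1))|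
        ≤ |(Real.exp (Lf m n) - 1 - Lf m n) + (Lf m n - c/X)| + |c/X - c/(X-1)| := abs_add_le _ _
      _ ≤ |Real.exp (Lf m n) - 1 - Lf m n| + |Lf m n - c/X| + |c/X - c/(X-1)| := by
          linarith [abs_add_le (Real.exp (Lf m n) - 1 - Lf m n) (Lf m n - c/X)]
      _ ≤ (|c| + C₀)^2/X^2 + C₀/X^2 + 2*|c|/X^2 := by linarith
      _ = C₁/X^2 := by rw [hC₁]; ring
  have hC₁0 : 0 ≤ C₁ := by
    rw [hC₁]
    have := abs_nonneg c
    nlinarith [sq_nonneg (|c| + C₀)]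
  have hGm1 : Real.Gamma (X-1) = Real.Gamma X / (X-1) := by
    rw [hG1]; field_simp
  have hdiff : zetaphi3 m n - K * (3/2)^(n+m) * (Real.Gamma X + c * Real.Gamma (X-1)) =
      K * (3/2)^(n+m) * Real.Gamma X * (Real.exp (Lf m n) - 1 - c/(X-1)) := by
    rw [zeta_eq m n hn1, ← hK, ← hGamma, hGm1]
    field_simp
    ring
  rw [Real.norm_eq_abs, Real.norm_eq_abs, hdiff]
  have hGXpos : 0 < Real.Gamma X := by rw [hG1, hG2]; positivity
  rw [abs_mul, abs_of_pos (show (0:ℝ) < K * (3/2)^(n+m) * Real.Gamma X by positivity),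
    abs_of_pos (show (0:ℝ) < (3/2:ℝ)^n * Real.Gamma (X-2) from mul_pos (by positivity) hG2pos)]
  calc K * (3/2)^(n+m) * Real.Gamma X * |Real.exp (Lf m n) - 1 - c/(X-1)|
      = (K * (3/2)^m * ((3/2:ℝ)^n * Real.Gamma (X-2))) * ((X-1)*(X-2)*|Real.exp (Lf m n) - 1 - c/(X-1)|) := by
        rw [pow_add, hG1, hG2]; ring
    _ ≤ (K * (3/2)^m * ((3/2:ℝ)^n * Real.Gamma (X-2))) * C₁ := by
        apply mul_le_mul_of_nonneg_left ?_ (by positivity)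
        calc (X-1)*(X-2)*|Real.exp (Lf m n) - 1 - c/(X-1)|
            ≤ (X-1)*(X-2)*(C₁/X^2) := by
              apply mul_le_mul_of_nonneg_left hkey (by nlinarith)
          _ ≤ X^2*(C₁/X^2) := by
              apply mul_le_mul_of_nonneg_right (by nlinarith) (by positivity)
          _ = C₁ := by field_simp
    _ = K * (3/2)^m * C₁ * ((3/2:ℝ)^n * Real.Gamma (X-2)) := by ring


end Phi3Aux
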